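/- For x of order 4 in G = A(n,θ), the centralizer of x is the subgroup generated by x and the center Z(G), and has order 2^{n+1}. -/

import Mathlib

noncomputable section

abbrev Fq (n : ℕ) : Type := GaloisField 2 n

instance (n : ℕ) : Fintype (Fq n) := Fintype.ofFinite _

@[ext] structure SuzukiA (n : ℕ) (θ : Fq n ≃+* Fq n) where
  a : Fq n
  b : Fq n

namespace SuzukiA

variable {n : ℕ} {θ : Fq n ≃+* Fq n}

instance : Mul (SuzukiA n θ) := ⟨fun x y => ⟨x.a + y.a, x.b + y.b + x.a * θ y.a⟩⟩
instance : One (SuzukiA n θ) := ⟨⟨0, 0⟩⟩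
instance : Inv (SuzukiA n θ) := ⟨fun x => ⟨x.a, x.b + x.a * θ x.a⟩⟩

theorem mul_def (x y : SuzukiA n θ) :
    x * y = ⟨x.a + y.a, x.b + y.b + x.a * θ y.a⟩ := rfl

@[simp] theorem one_a : (1 : SuzukiA n θ).a = 0 := rfl
@[simp] theorem one_b : (1 : SuzukiA n θ).b = 0 := rfl

instance : Group (SuzukiA n θ) where
  mul_assoc x y z := by ext <;> simp [mul_def, map_add] <;> ring
  one_mul x := by ext <;> simp [mul_def]
  mul_one x := by ext <;> simp [mul_def]
  inv_mul_cancel x := by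
    have h2 : (2 : Fq n) = 0 := by
      have := CharP.cast_eq_zero (Fq n) 2
      exact_mod_cast this
    show (⟨x.a, x.b + x.a * θ x.a⟩ * x : SuzukiA n θ) = 1
    ext
    · show x.a + x.a = 0
      linear_combination x.a * h2
    · show x.b + x.a * θ x.a + x.b + x.a * θ x.a = 0
      linear_combination (x.b + x.a * θ x.a) * h2

instance : Fintype (SuzukiA n θ) :=
  Fintype.ofEquiv (Fq n × Fq n)
    { toFun := fun p => ⟨p.1, p.2⟩
      invFun := fun x => (x.a, x.b)
      left_inv := fun _ => rfl
      right_inv := fun _ => rfl }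

end SuzukiA


private lemma zpow_fixed {n : ℕ} (e : Fq n ≃+* Fq n) (t : Fq n) (h : e t = t) :
    ∀ m : ℤ, (e ^ m) t = t := by
  have hnat : ∀ k : ℕ, (e ^ k) t = t := by
    intro k
    induction k with
    | zero => rfl
    | succ k ih =>
      rw [pow_succ]
      show (e ^ k) (e t) = t
      rw [h, ih]
  intro m
  obtain ⟨k, rfl | rfl⟩ := Int.eq_nat_or_neg m
  · rw [zpow_natCast]; exact hnat k
  · rw [zpow_neg, zpow_natCast]
    calc ((e ^ k)⁻¹) t = (e ^ k)⁻¹ ((e ^ k) t) := by rw [hnat k]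
      _ = ((e ^ k)⁻¹ * (e ^ k)) t := rfl
      _ = t := by rw [inv_mul_cancel]; rfl

private lemma theta_fixed {n : ℕ} (θ : Fq n ≃+* Fq n)
    (hθ : ∀ σ : Fq n ≃+* Fq n, σ ∈ Subgroup.zpowers θ)
    (t : Fq n) (ht : θ t = t) : t = 0 ∨ t = 1 := by
  obtain ⟨m, hm⟩ := hθ (frobeniusEquiv (Fq n) 2)
  have h2 : t ^ 2 = t := by
    have h3 : (θ ^ m) t = t := zpow_fixed θ t ht m
    simp only [] at hm
    rw [show θ ^ m = frobeniusEquiv (Fq n) 2 from hm] at h3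
    simpa [frobenius_def] using h3
  have : t * (t - 1) = 0 := by ring_nf; linear_combination h2
  rcases mul_eq_zero.mp this with h | h
  · exact Or.inl h
  · exact Or.inr (by linear_combination h)

open SuzukiA in
theorem stmt8 (n : ℕ) (hn : 1 < n) (hodd : Odd n) (θ : Fq n ≃+* Fq n)
    (hθ : ∀ σ : Fq n ≃+* Fq n, σ ∈ Subgroup.zpowers θ)
    (x : SuzukiA n θ) (hx : orderOf x = 4) :
    Subgroup.centralizer {x} =
      Subgroup.closure ({x} ∪ (Subgroup.center (SuzukiA n θ) : Set (SuzukiA n θ))) ∧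
    Nat.card (Subgroup.centralizer {x} : Subgroup (SuzukiA n θ)) = 2 ^ (n + 1) := by
  have h2 : (2 : Fq n) = 0 := by
    have := CharP.cast_eq_zero (Fq n) 2
    exact_mod_cast this
  -- x.a ≠ 0
  have ha : x.a ≠ 0 := by
    intro h
    have hx2 : x * x = 1 := by
      ext
      · show x.a + x.a = 0
        linear_combination x.a * h2
      · show x.b + x.b + x.a * θ x.a = 0
        rw [h]
        linear_combination x.b * h2
    have : orderOf x ∣ 2 := orderOf_dvd_of_pow_eq_one (by rw [pow_two]; exact hx2)
    rw [hx] at this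
    omega
  -- center characterization
  have hcenter : ∀ z : SuzukiA n θ, z.a = 0 → z ∈ Subgroup.center (SuzukiA n θ) := by
    intro z hz
    rw [Subgroup.mem_center_iff]
    intro g
    ext
    · show g.a + z.a = z.a + g.a
      ring
    · show g.b + z.b + g.a * θ z.a = z.b + g.b + z.a * θ g.a
      rw [hz, map_zero]
      ring
  -- centralizer characterization
  have hcent : ∀ y : SuzukiA n θ,
      y ∈ Subgroup.centralizer ({x} : Set (SuzukiA n θ)) ↔ (y.a = 0 ∨ y.a = x.a) := by
    intro y
    rw [Subgroup.mem_centralizer_iff]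
    constructor
    · intro h
      have hxy := h x rfl
      have hb : x.b + y.b + x.a * θ y.a = y.b + x.b + y.a * θ x.a := congrArg SuzukiA.b hxy
      have hkey : x.a * θ y.a = y.a * θ x.a := by linear_combination hb
      have hθa : θ x.a ≠ 0 := by
        simpa using (map_ne_zero θ).mpr ha
      have hfix : θ (y.a / x.a) = y.a / x.a := by
        rw [map_div₀]
        field_simp
        linear_combination hkey
      rcases theta_fixed θ hθ _ hfix with h | h
      · left
        field_simp at h
        simpa using h
      · right
        field_simp at h
        exact h
    · intro h g hg
      rw [Set.mem_singleton_iff] at hg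
      rw [hg]
      rcases h with h | h
      · ext
        · show x.a + y.a = y.a + x.a
          ring
        · show x.b + y.b + x.a * θ y.a = y.b + x.b + y.a * θ x.a
          rw [h, map_zero]
          ring
      · ext
        · show x.a + y.a = y.a + x.a
          ring
        · show x.b + y.b + x.a * θ y.a = y.b + x.b + y.a * θ x.a
          rw [h]
          ring
  constructor
  · apply le_antisymm
    · intro y hy
      rcases (hcent y).mp hy with h | h
      · exact Subgroup.subset_closure (Or.inr (hcenter y h))
      · have hz : (⟨0, x.b + y.b⟩ : SuzukiA n θ) ∈ Subgroup.center (SuzukiA n θ) :=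
          hcenter _ rfl
        have hyx : y = x * ⟨0, x.b + y.b⟩ := by
          ext
          · show y.a = x.a + 0
            rw [h, add_zero]
          · show y.b = x.b + (x.b + y.b) + x.a * θ 0
            rw [map_zero, mul_zero, add_zero]
            linear_combination -x.b * h2
        rw [hyx]
        exact mul_mem (Subgroup.subset_closure (Or.inl rfl))
          (Subgroup.subset_closure (Or.inr hz))
    · rw [Subgroup.closure_le]
      rintro y (hy | hy)
      · rw [Set.mem_singleton_iff] at hy
        subst hy
        rw [SetLike.mem_coe, hcent]
        right; rfl
      · rw [SetLike.mem_coe, Subgroup.mem_centralizer_iff]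
        intro g hg
        exact Subgroup.mem_center_iff.mp hy g
  · set C := Subgroup.centralizer ({x} : Set (SuzukiA n θ)) with hC
    let f : Bool × Fq n → C := fun p =>
      ⟨⟨if p.1 then x.a else 0, p.2⟩, by rw [hC, hcent]; cases p.1 <;> simp⟩
    have hbij : Function.Bijective f := by
      constructor
      · rintro ⟨s, d⟩ ⟨t, e⟩ hfe
        have h1 : (if s then x.a else 0) = (if t then x.a else 0) :=
          congrArg (fun z => (z : SuzukiA n θ).a) (congrArg Subtype.val hfe)
        have h2' : d = e :=
          congrArg (fun z => (z : SuzukiA n θ).b) (congrArg Subtype.val hfe)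
        cases s <;> cases t <;> simp_all
      · rintro ⟨y, hy⟩
        rcases (hcent y).mp (hC ▸ hy) with h | h
        · exact ⟨(false, y.b), by apply Subtype.ext; ext <;> simp [f, h.symm]⟩
        · exact ⟨(true, y.b), by apply Subtype.ext; ext <;> simp [f, h]⟩
    have hF : Nat.card (Fq n) = 2 ^ n := by
      exact GaloisField.card 2 n (by omega : n ≠ 0)
    rw [← Nat.card_eq_of_bijective f hbij, Nat.card_prod, hF]
    simp [pow_succ]
    ring
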